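/- Let K be a field and X a set. In RT(X), for every x ∈ X, every p ≥ 1 and all rooted trees T₁,…,T_p decorated by X, the following identity holds: B(x, T₁,…,T_p) = B(x, T₂,…,T_p) ⋆ T₁ − Σ_{j=2}^{p} B(x, T₂,…,T_j ⋆ T₁,…,T_p), where B(x, S₁,…,S_q) denotes the rooted tree with root decorated by x and branches S₁,…,S_q, extended linearly in each branch argument (so that B applied to the linear combination T_j ⋆ T₁ of trees in place of the j-th branch makes sense in RT(X)). -/

import Mathlib

/-- Planar presentation of a rooted tree decorated by `X`: a node label together with a
finite list of branches (each itself a decorated rooted tree). -/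
inductive PreTree (X : Type*) where
  | node : X → List (PreTree X) → PreTree X

/-- Two planar presentations define the same abstract decorated rooted tree: the root
labels agree and the branch lists agree up to pointwise equivalence and permutation
(so that the branches of each vertex form a multiset). -/
inductive PTEquiv {X : Type*} : PreTree X → PreTree X → Prop where
  | node (x : X) {l₁ l₂ l₃ : List (PreTree X)} :
      List.Forall₂ PTEquiv l₁ l₂ → l₂.Perm l₃ → PTEquiv (.node x l₁) (.node x l₃)

/-- A rooted tree decorated by `X`: a node labelled by an element of `X` together with a
finite multiset of branches. -/
def DecoratedTree (X : Type*) := Quot (@PTEquiv X)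

/-- The decorated rooted tree presented by a planar tree. -/
def DecoratedTree.mk {X : Type*} (t : PreTree X) : DecoratedTree X := Quot.mk _ t

mutual
/-- `graftList s t` is the list, indexed by the vertices `v` of `t`, of the graftings of
`s` at `v` in `t` (i.e. the tree obtained from `t` by adding `s` as a new branch of `v`). -/
def graftList {X : Type*} (s : PreTree X) : PreTree X → List (PreTree X)
  | .node x l =>
      PreTree.node x (s :: l) :: (graftListAux s l).map fun l' => PreTree.node x l'
/-- Auxiliary: graftings of `s` at vertices of the trees of a branch list. -/
def graftListAux {X : Type*} (s : PreTree X) : List (PreTree X) → List (List (PreTree X))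
  | [] => []
  | t :: ts =>
      ((graftList s t).map fun t' => t' :: ts) ++ (graftListAux s ts).map fun ts' => t :: ts'
end

/-- `T₁ ⋆ T₂` for trees: the sum, over all vertices `v` of `T₁`, of the grafting of `T₂`
at `v` in `T₁`, an element of the free `K`-vector space `RT(X)` on decorated rooted trees. -/
noncomputable def treeStar (K : Type*) [Field K] {X : Type*} (t s : PreTree X) :
    DecoratedTree X →₀ K :=
  ((graftList s t).map fun u => Finsupp.single (DecoratedTree.mk u) (1 : K)).sum

/-- The bilinear star (grafting) product on `RT(X) = DecoratedTree X →₀ K`. -/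
noncomputable def star (K : Type*) [Field K] {X : Type*}
    (a b : DecoratedTree X →₀ K) : DecoratedTree X →₀ K :=
  a.sum fun t c => b.sum fun s c' => (c * c') • treeStar K t.out s.out

/-- The basis vector of `RT(X)` corresponding to a decorated rooted tree. -/
noncomputable def single1 (K : Type*) [Field K] {X : Type*} (t : DecoratedTree X) :
    DecoratedTree X →₀ K := Finsupp.single t 1


/-- `B(x, T₁, …, T_p)`: the decorated rooted tree whose root is labelled `x` and whose
branches are `T₁, …, T_p` (given as decorated rooted trees, via chosen planar
representatives). -/
noncomputable def nodeQ {X : Type*} (x : X) (l : List (DecoratedTree X)) :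
    DecoratedTree X :=
  DecoratedTree.mk (PreTree.node x (l.map Quot.out))

/-- The multilinear extension of `B`: `Bmulti x [a₁, …, a_p]` is `B(x, -, …, -)` applied to
the linear combinations `a₁, …, a_p ∈ RT(X)`, extended linearly in each branch argument. -/
noncomputable def BmultiAux (K : Type*) [Field K] {X : Type*} (x : X) :
    List (DecoratedTree X →₀ K) → List (DecoratedTree X) → (DecoratedTree X →₀ K)
  | [], acc => Finsupp.single (nodeQ x acc.reverse) 1
  | a :: as, acc => a.sum fun t c => c • BmultiAux K x as (t :: acc)

/-- `B(x, a₁, …, a_p)` for `a₁, …, a_p ∈ RT(X)`, multilinear in the branch arguments. -/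
noncomputable def Bmulti (K : Type*) [Field K] {X : Type*} (x : X)
    (l : List (DecoratedTree X →₀ K)) : DecoratedTree X →₀ K :=
  BmultiAux K x l []

/-! ### Auxiliary machinery -/

namespace UngraftAux

open List Relation

variable {X : Type*}

-- Size of a pre-tree.
mutual
def psize : PreTree X → Nat
  | .node _ l => lsize l + 1
def lsize : List (PreTree X) → Nat
  | [] => 0
  | t :: ts => psize t + lsize ts
end

theorem psize_le_of_mem {t : PreTree X} : ∀ {l : List (PreTree X)}, t ∈ l → psize t ≤ lsize l := by
  intro l h
  induction l with
  | nil => cases h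
  | cons a ts ih =>
    rcases List.mem_cons.1 h with rfl | h
    · simp [lsize]
    · have := ih h
      simp [lsize]; omega

mutual
theorem ptrefl : ∀ t : PreTree X, PTEquiv t t
  | .node x l => PTEquiv.node x (ptreflL l) (List.Perm.refl _)
theorem ptreflL : ∀ l : List (PreTree X), List.Forall₂ PTEquiv l l
  | [] => List.Forall₂.nil
  | t :: ts => List.Forall₂.cons (ptrefl t) (ptreflL ts)
end

theorem forall₂_imp_mem {α β : Type*} {R S : α → β → Prop} :
    ∀ {l₁ : List α} {l₂ : List β}, List.Forall₂ R l₁ l₂ →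
      (∀ a ∈ l₁, ∀ b, R a b → S a b) → List.Forall₂ S l₁ l₂ := by
  intro l₁ l₂ h
  induction h with
  | nil => intro; exact List.Forall₂.nil
  | cons hab h ih =>
    intro hmem
    exact List.Forall₂.cons (hmem _ List.mem_cons_self _ hab)
      (ih fun a ha b hr => hmem a (List.mem_cons_of_mem _ ha) b hr)

theorem forall₂_trans_mem {α : Type*} {R : α → α → Prop} :
    ∀ {l₁ l₂ l₃ : List α}, (∀ a ∈ l₁, ∀ b c, R a b → R b c → R a c) →
      List.Forall₂ R l₁ l₂ → List.Forall₂ R l₂ l₃ → List.Forall₂ R l₁ l₃ := by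
  intro l₁ l₂ l₃ htrans h₁
  induction h₁ generalizing l₃ with
  | nil => intro h₂; cases h₂; exact List.Forall₂.nil
  | cons hab h ih =>
    intro h₂
    cases h₂ with
    | cons hbc h₂ =>
      exact List.Forall₂.cons (htrans _ List.mem_cons_self _ _ hab hbc)
        (ih (fun a ha b c => htrans a (List.mem_cons_of_mem _ ha) b c) h₂)

theorem perm_forall₂ {α β : Type*} {R : α → β → Prop} :
    ∀ {l₁ l₂ : List α} {m : List β}, l₁.Perm l₂ → List.Forall₂ R l₁ m →
      ∃ m', List.Forall₂ R l₂ m' ∧ m.Perm m' := by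
  intro l₁ l₂ m p
  induction p generalizing m with
  | nil => intro h; exact ⟨m, h, List.Perm.refl _⟩
  | cons a p ih =>
    intro h
    cases h with
    | cons hab h =>
      obtain ⟨m', hm', pm'⟩ := ih h
      exact ⟨_ :: m', List.Forall₂.cons hab hm', List.Perm.cons _ pm'⟩
  | swap a b l =>
    intro h
    cases h with
    | cons hb h =>
      cases h with
      | cons ha h =>
        exact ⟨_ :: _ :: _, List.Forall₂.cons ha (List.Forall₂.cons hb h),
          List.Perm.swap _ _ _⟩
  | trans p₁ p₂ ih₁ ih₂ =>
    intro h
    obtain ⟨m₁, h₁, pm₁⟩ := ih₁ h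
    obtain ⟨m₂, h₂, pm₂⟩ := ih₂ h₁
    exact ⟨m₂, h₂, pm₁.trans pm₂⟩

theorem ptsymm_aux : ∀ n : ℕ, ∀ t u : PreTree X, psize t ≤ n → PTEquiv t u → PTEquiv u t := by
  intro n
  induction n with
  | zero =>
    intro t
    cases t with
    | node x l => intro u h; simp [psize] at h
  | succ n ih =>
    intro t u hs h
    cases h with
    | @node x l₁ l₂ l₃ hf p =>
      have hsz : lsize l₁ ≤ n := by simp [psize] at hs; omega
      have hf' : List.Forall₂ (flip PTEquiv) l₁ l₂ :=
        forall₂_imp_mem hf fun a ha b hab =>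
          ih a b (le_trans (psize_le_of_mem ha) hsz) hab
      have hf₂ : List.Forall₂ PTEquiv l₂ l₁ := List.Forall₂.flip hf'
      obtain ⟨m', hm', pm'⟩ := perm_forall₂ p hf₂
      exact PTEquiv.node x hm' pm'.symm

theorem pttrans_aux : ∀ n : ℕ, ∀ t u v : PreTree X, psize t ≤ n →
    PTEquiv t u → PTEquiv u v → PTEquiv t v := by
  intro n
  induction n with
  | zero =>
    intro t
    cases t with
    | node x l => intro u v h; simp [psize] at h
  | succ n ih =>
    intro t u v hs h₁ h₂
    cases h₁ with
    | @node x l₁ l₂ l₃ hf₁ p₁ =>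
      cases h₂ with
      | @node _ _ m₂ m₃ hf₂ p₂ =>
        have hsz : lsize l₁ ≤ n := by simp [psize] at hs; omega
        obtain ⟨m', hm', pm'⟩ := perm_forall₂ p₁.symm hf₂
        -- hm' : Forall₂ PTEquiv l₂ m', pm' : m₂.Perm m'
        have hcomp : List.Forall₂ PTEquiv l₁ m' :=
          forall₂_trans_mem
            (fun a ha b c hab hbc =>
              ih a b c (le_trans (psize_le_of_mem ha) hsz) hab hbc)
            hf₁ hm'
        exact PTEquiv.node x hcomp (pm'.symm.trans p₂)

theorem ptequiv_equivalence : Equivalence (@PTEquiv X) :=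
  ⟨ptrefl, fun h => ptsymm_aux _ _ _ le_rfl h, fun h₁ h₂ => pttrans_aux _ _ _ _ le_rfl h₁ h₂⟩

theorem ptexact {a b : PreTree X} (h : DecoratedTree.mk a = DecoratedTree.mk b) :
    PTEquiv a b :=
  ptequiv_equivalence.eqvGen_iff.mp (Quot.eqvGen_exact h)

theorem mk_out (a : DecoratedTree X) : DecoratedTree.mk a.out = a := Quot.out_eq a

theorem pt_out (t : PreTree X) : PTEquiv (DecoratedTree.mk t).out t :=
  ptexact (mk_out _)

theorem exists_perm_of_map_perm {α β : Type*} {f : α → β} {A L : List β} (p : A.Perm L) :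
    ∀ l : List α, l.map f = A → ∃ l', l.Perm l' ∧ l'.map f = L := by
  induction p with
  | nil => intro l h; exact ⟨l, List.Perm.refl _, h⟩
  | cons a p ih =>
    intro l h
    cases l with
    | nil => simp at h
    | cons u l₀ =>
      simp only [List.map_cons, List.cons.injEq] at h
      obtain ⟨hu, h₀⟩ := h
      obtain ⟨l₀', p₀, h₀'⟩ := ih l₀ h₀
      exact ⟨u :: l₀', List.Perm.cons u p₀, by simp [hu, h₀']⟩
  | swap a b l =>
    intro l h
    match l, h with
    | u :: v :: l₀, h =>
      simp only [List.map_cons, List.cons.injEq] at h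
      obtain ⟨hu, hv, h₀⟩ := h
      exact ⟨v :: u :: l₀, List.Perm.swap v u l₀, by simp [hu, hv, h₀]⟩
  | trans p₁ p₂ ih₁ ih₂ =>
    intro l h
    obtain ⟨l₁, q₁, h₁⟩ := ih₁ l h
    obtain ⟨l₂, q₂, h₂⟩ := ih₂ l₁ h₁
    exact ⟨l₂, q₁.trans q₂, h₂⟩

theorem forall₂_of_map_eq {α β : Type*} {f : α → β} :
    ∀ {l m : List α}, l.map f = m.map f → List.Forall₂ (fun a b => f a = f b) l m := by
  intro l
  induction l with
  | nil => intro m h; cases m with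
    | nil => exact List.Forall₂.nil
    | cons => simp at h
  | cons a l ih =>
    intro m h
    cases m with
    | nil => simp at h
    | cons b m =>
      simp only [List.map_cons, List.cons.injEq] at h
      exact List.Forall₂.cons h.1 (ih h.2)

/-- The multiset of equivalence classes of a list of pre-trees. -/
def M (l : List (PreTree X)) : Multiset (DecoratedTree X) :=
  (l.map DecoratedTree.mk : List (DecoratedTree X))

theorem M_cons (t : PreTree X) (l : List (PreTree X)) :
    M (t :: l) = DecoratedTree.mk t ::ₘ M l := rfl

theorem M_forall₂ {l l' : List (PreTree X)} (h : List.Forall₂ PTEquiv l l') :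
    l.map DecoratedTree.mk = l'.map DecoratedTree.mk := by
  induction h with
  | nil => rfl
  | cons hab h ih => simp [ih, Quot.sound hab, DecoratedTree.mk]

theorem M_forall₂' {l l' : List (PreTree X)} (h : List.Forall₂ PTEquiv l l') : M l = M l' := by
  simp [M, M_forall₂ h]

theorem M_perm {l l' : List (PreTree X)} (p : l.Perm l') : M l = M l' :=
  Multiset.coe_eq_coe.mpr (p.map _)

theorem ptequiv_node_of_multiset {x : X} {l l' : List (PreTree X)} (h : M l = M l') :
    PTEquiv (.node x l) (.node x l') := by
  have p : (l'.map DecoratedTree.mk).Perm (l.map DecoratedTree.mk) :=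
    (Multiset.coe_eq_coe.mp h).symm
  obtain ⟨l'', p', h''⟩ := exists_perm_of_map_perm p l' rfl
  have hf : List.Forall₂ PTEquiv l l'' :=
    forall₂_imp_mem (forall₂_of_map_eq h''.symm) fun a _ b hab => ptexact hab
  exact PTEquiv.node x hf p'.symm

theorem mk_node_congr {x : X} {l l' : List (PreTree X)} (h : M l = M l') :
    DecoratedTree.mk (.node x l) = DecoratedTree.mk (.node x l') :=
  Quot.sound (ptequiv_node_of_multiset h)

/-- The node constructor, as a function of the multiset of branch classes. -/
noncomputable def nodeM (x : X) (m : Multiset (DecoratedTree X)) : DecoratedTree X :=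
  DecoratedTree.mk (.node x (m.toList.map Quot.out))

theorem nodeM_M (x : X) (l : List (PreTree X)) :
    nodeM x (M l) = DecoratedTree.mk (.node x l) := by
  apply mk_node_congr
  show (((M l).toList.map Quot.out).map DecoratedTree.mk : Multiset (DecoratedTree X)) = M l
  erw [List.map_map]
  have : (DecoratedTree.mk ∘ Quot.out : DecoratedTree X → DecoratedTree X) = id :=
    funext fun a => mk_out a
  erw [this, List.map_id]
  exact Multiset.coe_toList _

theorem nodeQ_eq_nodeM (x : X) (L : List (DecoratedTree X)) :
    nodeQ x L = nodeM x (L : Multiset (DecoratedTree X)) := by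
  have h1 : nodeM x (M (L.map Quot.out)) = DecoratedTree.mk (.node x (L.map Quot.out)) :=
    nodeM_M x _
  have h2 : M (L.map Quot.out) = (L : Multiset (DecoratedTree X)) := by
    show ((((L.map Quot.out)).map DecoratedTree.mk : List (DecoratedTree X)) : Multiset _)
      = (L : Multiset (DecoratedTree X))
    erw [List.map_map]
    have : (DecoratedTree.mk ∘ Quot.out : DecoratedTree X → DecoratedTree X) = id :=
      funext fun a => mk_out a
    erw [this, List.map_id]
  rw [← h2, h1]; rfl

/-- Multiset of classes of graftings of `s` into `t`. -/
def Gm (s t : PreTree X) : Multiset (DecoratedTree X) :=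
  ((graftList s t).map DecoratedTree.mk : List (DecoratedTree X))

/-- Multiset (over vertices of the branch list) of the multisets of branch classes after
grafting. -/
def Am (s : PreTree X) (l : List (PreTree X)) : Multiset (Multiset (DecoratedTree X)) :=
  ((graftListAux s l).map M : List (Multiset (DecoratedTree X)))

theorem Gm_node (s : PreTree X) (x : X) (l : List (PreTree X)) :
    Gm s (.node x l) = nodeM x (DecoratedTree.mk s ::ₘ M l) ::ₘ (Am s l).map (nodeM x) := by
  show ((((PreTree.node x (s :: l)) ::
      (graftListAux s l).map fun l' => PreTree.node x l').map DecoratedTree.mk :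
      List (DecoratedTree X)) : Multiset _)
    = nodeM x (DecoratedTree.mk s ::ₘ M l) ::ₘ (Am s l).map (nodeM x)
  rw [List.map_cons, List.map_map]
  have h1 : nodeM x (DecoratedTree.mk s ::ₘ M l) = DecoratedTree.mk (.node x (s :: l)) := by
    rw [← M_cons]; exact nodeM_M x _
  have h2 : (Am s l).map (nodeM x)
      = (((graftListAux s l).map fun l' => DecoratedTree.mk (.node x l') :
        List (DecoratedTree X)) : Multiset _) := by
    show ((((graftListAux s l).map M : List (Multiset (DecoratedTree X))) :
        Multiset _)).map (nodeM x)
      = (((graftListAux s l).map fun l' => DecoratedTree.mk (.node x l') :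
        List (DecoratedTree X)) : Multiset _)
    rw [Multiset.map_coe, List.map_map]
    congr 1
    exact List.map_congr_left fun l' _ => nodeM_M x l'
  rw [h1, h2]
  rfl

theorem Am_nil (s : PreTree X) : Am s [] = 0 := rfl

theorem Am_cons (s t : PreTree X) (ts : List (PreTree X)) :
    Am s (t :: ts) = (Gm s t).map (· ::ₘ M ts)
      + (Am s ts).map (DecoratedTree.mk t ::ₘ ·) := by
  show (((((graftList s t).map fun t' => t' :: ts)
      ++ (graftListAux s ts).map fun ts' => t :: ts').map M :
      List (Multiset (DecoratedTree X))) : Multiset _)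
    = (Gm s t).map (· ::ₘ M ts) + (Am s ts).map (DecoratedTree.mk t ::ₘ ·)
  rw [List.map_append, List.map_map, List.map_map]
  have h1 : (Gm s t).map (· ::ₘ M ts)
      = (((graftList s t).map (M ∘ fun t' => t' :: ts) : List _) : Multiset _) := by
    show (((graftList s t).map DecoratedTree.mk : List (DecoratedTree X)) :
        Multiset _).map (· ::ₘ M ts)
      = (((graftList s t).map (M ∘ fun t' => t' :: ts) :
        List (Multiset (DecoratedTree X))) : Multiset _)
    rw [Multiset.map_coe, List.map_map]
    rfl
  have h2 : (Am s ts).map (DecoratedTree.mk t ::ₘ ·)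
      = (((graftListAux s ts).map (M ∘ fun ts' => t :: ts') : List _) : Multiset _) := by
    show (((graftListAux s ts).map M : List (Multiset (DecoratedTree X))) :
        Multiset _).map (DecoratedTree.mk t ::ₘ ·)
      = (((graftListAux s ts).map (M ∘ fun ts' => t :: ts') :
        List (Multiset (DecoratedTree X))) : Multiset _)
    rw [Multiset.map_coe, List.map_map]
    rfl
  rw [h1, h2]
  exact (Multiset.coe_add _ _)

theorem AmP (s : PreTree X) : ∀ {l l' : List (PreTree X)}, l.Perm l' → Am s l = Am s l' := by
  intro l l' p
  induction p with
  | nil => rfl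
  | cons t p ih => rw [Am_cons, Am_cons, ih, M_perm p]
  | swap u v l =>
    rw [Am_cons, Am_cons, Am_cons, Am_cons]
    simp only [Multiset.map_add, Multiset.map_map, Function.comp_def, M_cons]
    have e1 : (Gm s v).map (fun d => d ::ₘ DecoratedTree.mk u ::ₘ M l)
        = (Gm s v).map (fun d => DecoratedTree.mk u ::ₘ d ::ₘ M l) :=
      Multiset.map_congr rfl fun d _ => Multiset.cons_swap _ _ _
    have e2 : (Gm s u).map (fun d => d ::ₘ DecoratedTree.mk v ::ₘ M l)
        = (Gm s u).map (fun d => DecoratedTree.mk v ::ₘ d ::ₘ M l) :=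
      Multiset.map_congr rfl fun d _ => Multiset.cons_swap _ _ _
    have e3 : (Am s l).map (fun m => DecoratedTree.mk v ::ₘ DecoratedTree.mk u ::ₘ m)
        = (Am s l).map (fun m => DecoratedTree.mk u ::ₘ DecoratedTree.mk v ::ₘ m) :=
      Multiset.map_congr rfl fun m _ => Multiset.cons_swap _ _ _
    rw [e1, ← e2, e3]
    abel
  | trans _ _ ih₁ ih₂ => exact ih₁.trans ih₂

theorem AmF (s : PreTree X) : ∀ {l l' : List (PreTree X)},
    (∀ u ∈ l, ∀ u', PTEquiv u u' → Gm s u = Gm s u') →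
    List.Forall₂ PTEquiv l l' → Am s l = Am s l' := by
  intro l l' hrec h
  induction h with
  | nil => rfl
  | @cons t t' ts ts' htt' h ih =>
    rw [Am_cons, Am_cons, hrec t List.mem_cons_self t' htt',
      ih fun u hu => hrec u (List.mem_cons_of_mem _ hu), M_forall₂' h,
      show DecoratedTree.mk t = DecoratedTree.mk t' from Quot.sound htt']

theorem Gm_inv (s : PreTree X) : ∀ n : ℕ, ∀ t t' : PreTree X, psize t ≤ n →
    PTEquiv t t' → Gm s t = Gm s t' := by
  intro n
  induction n with
  | zero =>
    intro t
    cases t with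
    | node x l => intro t' h; simp [psize] at h
  | succ n ih =>
    intro t t' hs h
    cases h with
    | @node x l₁ l₂ l₃ hf p =>
      have hsz : lsize l₁ ≤ n := by simp [psize] at hs; omega
      have hM : M l₁ = M l₃ := (M_forall₂' hf).trans (M_perm p)
      have hA : Am s l₁ = Am s l₃ :=
        (AmF s (fun u hu u' h' => ih u u' (le_trans (psize_le_of_mem hu) hsz) h') hf).trans
          (AmP s p)
      rw [Gm_node, Gm_node, hM, hA]

theorem forall₂_set {α : Type*} {R : α → α → Prop} :
    ∀ {l l' : List α}, List.Forall₂ R l l' → ∀ {a b : α} (n : ℕ), R a b →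
      List.Forall₂ R (l.set n a) (l'.set n b) := by
  intro l l' h
  induction h with
  | nil => intro a b n _; exact List.Forall₂.nil
  | cons hab h ih =>
    intro a b n hr
    cases n with
    | zero => exact List.Forall₂.cons hr (by assumption)
    | succ n => exact List.Forall₂.cons hab (ih n hr)

theorem ptsymm {t u : PreTree X} (h : PTEquiv t u) : PTEquiv u t :=
  ptsymm_aux _ _ _ le_rfl h

end UngraftAux

open UngraftAux

section FinsuppLayer

variable (K : Type*) [Field K] {X : Type*}

theorem treeStar_eq (t s : PreTree X) :
    treeStar K t s = ((Gm s t).map fun d => Finsupp.single d (1 : K)).sum := by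
  show _ = ((((graftList s t).map DecoratedTree.mk : List _) : Multiset (DecoratedTree X)).map
    fun d => Finsupp.single d (1 : K)).sum
  rw [Multiset.map_coe, List.map_map, Multiset.sum_coe]
  rfl

theorem treeStar_inv {t t' : PreTree X} (s : PreTree X) (h : PTEquiv t t') :
    treeStar K t s = treeStar K t' s := by
  rw [treeStar_eq, treeStar_eq, Gm_inv s (psize t) t t' le_rfl h]

theorem star_single (a b : DecoratedTree X) :
    _root_.star K (single1 K a) (single1 K b) = treeStar K a.out b.out := by
  unfold _root_.star single1
  rw [Finsupp.sum_single_index (by simp), Finsupp.sum_single_index (by simp)]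
  simp

theorem BmultiAux_singles (x : X) : ∀ (L : List (DecoratedTree X)) (acc : List (DecoratedTree X)),
    BmultiAux K x (L.map (single1 K)) acc = Finsupp.single (nodeQ x (acc.reverse ++ L)) 1
  | [], acc => by simp [BmultiAux]
  | t :: L, acc => by
    show (Finsupp.single t (1:K)).sum
        (fun u c => c • BmultiAux K x (L.map (single1 K)) (u :: acc)) = _
    rw [Finsupp.sum_single_index (by simp), one_smul, BmultiAux_singles x L (t :: acc)]
    simp

theorem Bmulti_singles (x : X) (L : List (DecoratedTree X)) :
    Bmulti K x (L.map (single1 K)) = Finsupp.single (nodeQ x L) 1 := by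
  rw [Bmulti, BmultiAux_singles]; simp

theorem BmultiAux_set (x : X) : ∀ (Ts : List (DecoratedTree X)) (j : ℕ), j < Ts.length →
    ∀ (a : DecoratedTree X →₀ K) (acc : List (DecoratedTree X)),
    BmultiAux K x ((Ts.map (single1 K)).set j a) acc
      = a.sum fun t c => c • Finsupp.single (nodeQ x (acc.reverse ++ Ts.set j t)) 1 := by
  intro Ts
  induction Ts with
  | nil => intro j h; simp at h
  | cons T Ts ih =>
    intro j hj a acc
    cases j with
    | zero =>
      show a.sum (fun t c => c • BmultiAux K x (Ts.map (single1 K)) (t :: acc)) = _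
      apply Finsupp.sum_congr
      intro t _
      rw [BmultiAux_singles]
      simp
    | succ j =>
      have hj' : j < Ts.length := by simpa using hj
      show (Finsupp.single T (1:K)).sum
          (fun u c => c • BmultiAux K x ((Ts.map (single1 K)).set j a) (u :: acc)) = _
      rw [Finsupp.sum_single_index (by simp), one_smul, ih j hj' a (T :: acc)]
      apply Finsupp.sum_congr
      intro t _
      simp

theorem sum_singles_total {ι : Type*} (l : List ι) (g : ι → (DecoratedTree X →₀ K)) :
    ((l.map fun u => Finsupp.single u (1 : K)).sum).sum (fun t c => c • g t)
      = (l.map g).sum := by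
  induction l with
  | nil => simp
  | cons u l ih =>
    rw [List.map_cons, List.sum_cons, List.map_cons, List.sum_cons,
      Finsupp.sum_add_index' (by simp) (by intros; rw [add_smul]),
      Finsupp.sum_single_index (by simp), one_smul, ih]

theorem graftListAux_sum' {M : Type*} [AddCommMonoid M] (s : PreTree X) :
    ∀ (Ts : List (DecoratedTree X)) (f : List (PreTree X) → M),
    ((graftListAux s (Ts.map Quot.out)).map f).sum
      = ∑ j : Fin Ts.length,
          ((graftList s (Ts.get j).out).map fun g => f ((Ts.map Quot.out).set j g)).sum := by
  intro Ts
  induction Ts with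
  | nil => intro f; show ((graftListAux s []).map f).sum = _; simp [graftListAux]
  | cons T Ts ih =>
    intro f
    show ((((graftList s T.out).map fun t' => t' :: Ts.map Quot.out)
        ++ (graftListAux s (Ts.map Quot.out)).map fun ts' => T.out :: ts').map f).sum = _
    rw [List.map_append, List.sum_append, List.map_map, List.map_map,
      show ((graftListAux s (Ts.map Quot.out)).map (f ∘ fun ts' => T.out :: ts')).sum
        = ((graftListAux s (Ts.map Quot.out)).map fun l => f (T.out :: l)).sum from rfl]
    rw [ih (fun l => f (T.out :: l))]
    simp only [List.length_cons]
    rw [Fin.sum_univ_succ]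
    congr 1

end FinsuppLayer

/-- In `RT(X)`, for every `x ∈ X`, every `p ≥ 1` and all decorated rooted
trees `T₁, …, T_p` (here `T₁` together with the list `Ts = [T₂, …, T_p]`):
`B(x, T₁, …, T_p) = B(x, T₂, …, T_p) ⋆ T₁ − Σ_{j=2}^{p} B(x, T₂, …, T_j ⋆ T₁, …, T_p)`,
where `B` is extended linearly in each branch argument. -/
theorem ungrafting_identity (K : Type*) [Field K] (X : Type*)
    (x : X) (T₁ : DecoratedTree X) (Ts : List (DecoratedTree X)) :
    Bmulti K x ((T₁ :: Ts).map fun t => single1 K t)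
      = star K (Bmulti K x (Ts.map fun t => single1 K t)) (single1 K T₁)
        - ∑ j : Fin Ts.length,
            Bmulti K x
              ((Ts.map fun t => single1 K t).set j
                (star K (single1 K (Ts.get j)) (single1 K T₁))) := by
  classical
  rw [eq_sub_iff_add_eq]
  rw [show ((T₁ :: Ts).map fun t => single1 K t) = (T₁ :: Ts).map (single1 K) from rfl,
    Bmulti_singles, show (Ts.map fun t => single1 K t) = Ts.map (single1 K) from rfl,
    Bmulti_singles]
  have hstar : star K (Finsupp.single (nodeQ x Ts) 1) (single1 K T₁)
      = treeStar K (PreTree.node x (Ts.map Quot.out)) T₁.out := by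
    rw [show (Finsupp.single (nodeQ x Ts) (1:K)) = single1 K (nodeQ x Ts) from rfl,
      star_single]
    exact treeStar_inv K _ (pt_out _)
  rw [hstar]
  have hexp : treeStar K (PreTree.node x (Ts.map Quot.out)) T₁.out
      = Finsupp.single (nodeQ x (T₁ :: Ts)) 1
        + ((graftListAux T₁.out (Ts.map Quot.out)).map
            fun l' => Finsupp.single (DecoratedTree.mk (PreTree.node x l')) (1:K)).sum := by
    show ((graftList T₁.out (PreTree.node x (Ts.map Quot.out))).map
        fun u => Finsupp.single (DecoratedTree.mk u) (1:K)).sum = _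
    rw [graftList]
    rw [List.map_cons, List.sum_cons, List.map_map]
    rfl
  rw [hexp, graftListAux_sum' T₁.out Ts
    (fun l' => Finsupp.single (DecoratedTree.mk (PreTree.node x l')) (1:K))]
  congr 1
  apply Finset.sum_congr rfl
  intro j _
  have ha : star K (single1 K (Ts.get j)) (single1 K T₁)
      = ((((graftList T₁.out (Ts.get j).out).map DecoratedTree.mk).map
          fun u => Finsupp.single u (1:K))).sum := by
    rw [star_single, List.map_map]
    rfl
  rw [Bmulti, BmultiAux_set K x Ts j j.isLt, ha, sum_singles_total, List.map_map]
  apply congrArg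
  apply List.map_congr_left
  intro g _
  show Finsupp.single (nodeQ x (List.set Ts ↑j (DecoratedTree.mk g))) 1 = _
  have h1 : nodeQ x (Ts.set ↑j (DecoratedTree.mk g))
      = DecoratedTree.mk (PreTree.node x
          ((Ts.map Quot.out).set ↑j (DecoratedTree.mk g).out)) := by
    unfold nodeQ
    erw [List.map_set]
  rw [h1]
  have h2 : DecoratedTree.mk (PreTree.node x ((Ts.map Quot.out).set ↑j (DecoratedTree.mk g).out))
      = DecoratedTree.mk (PreTree.node x ((Ts.map Quot.out).set ↑j g)) := by
    apply mk_node_congr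
    apply M_forall₂'
    exact forall₂_set (ptreflL _) _ (pt_out g)
  rw [h2]
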